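/- Conversely, if every s-sparse vector c ∈ V^N is the unique minimizer of ‖z‖_{V,1} subject to Az = Ac, then A satisfies the Hilbert-valued null space property of order s: for all nonzero z in the kernel of A (acting on V^N) and all S with #S = s, ‖z_S‖_{V,1} < ‖z_{S^c}‖_{V,1}. -/
import Mathlib


/-- If every `s`-sparse Hilbert-valued vector is the unique `‖·‖_{V,1}`
minimizer subject to the measurement constraint, then `A` satisfies the
Hilbert-valued null space property of order `s`. -/
theorem unique_recovery_implies_nsp (V : Type*) [NormedAddCommGroup V]
    [InnerProductSpace ℝ V] [CompleteSpace V] (m N s : ℕ)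
    (A : Matrix (Fin m) (Fin N) ℝ)
    (hrec : ∀ c : Fin N → V, Set.ncard {ν | c ν ≠ 0} ≤ s →
      ∀ z : Fin N → V, (∀ i, ∑ ν, A i ν • z ν = ∑ ν, A i ν • c ν) → z ≠ c →
        ∑ ν, ‖c ν‖ < ∑ ν, ‖z ν‖) :
    ∀ z : Fin N → V, z ≠ 0 → (∀ i, ∑ ν, A i ν • z ν = 0) →
      ∀ S : Finset (Fin N), S.card = s →
        ∑ ν ∈ S, ‖z ν‖ < ∑ ν ∈ Sᶜ, ‖z ν‖ := by
  intro z hz hker S hS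
  set c : Fin N → V := fun ν => if ν ∈ S then z ν else 0 with hc
  set w : Fin N → V := fun ν => if ν ∈ S then 0 else -z ν with hw
  have hsparse : Set.ncard {ν | c ν ≠ 0} ≤ s := by
    have hsub : {ν | c ν ≠ 0} ⊆ (S : Set (Fin N)) := by
      intro ν hν
      by_contra h
      exact hν (by simp only [hc]; simp [Finset.mem_coe] at h; simp [h])
    calc Set.ncard {ν | c ν ≠ 0} ≤ Set.ncard (S : Set (Fin N)) :=
          Set.ncard_le_ncard hsub (S : Set (Fin N)).toFinite
      _ = S.card := by simp
      _ = s := hS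
  have hcw : ∀ ν, c ν - w ν = z ν := by
    intro ν; by_cases h : ν ∈ S <;> simp [hc, hw, h]
  have hconstr : ∀ i, ∑ ν, A i ν • w ν = ∑ ν, A i ν • c ν := by
    intro i
    have h2 : ∑ ν, A i ν • c ν - ∑ ν, A i ν • w ν = 0 := by
      rw [← Finset.sum_sub_distrib]
      calc ∑ ν, (A i ν • c ν - A i ν • w ν)
          = ∑ ν, A i ν • z ν := by
            apply Finset.sum_congr rfl; intro ν _
            rw [← smul_sub, hcw]
        _ = 0 := hker i
    exact (sub_eq_zero.mp h2).symm
  have hne : w ≠ c := by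
    intro h
    apply hz
    funext ν
    have := hcw ν
    rw [h] at this
    simpa using this.symm
  have hlt := hrec c hsparse w hconstr hne
  have h1 : ∑ ν, ‖c ν‖ = ∑ ν ∈ S, ‖z ν‖ := by
    rw [← Finset.sum_add_sum_compl S fun ν => ‖c ν‖]
    have : ∑ ν ∈ Sᶜ, ‖c ν‖ = 0 := by
      apply Finset.sum_eq_zero; intro ν hν
      simp [hc, (Finset.mem_compl.mp hν)]
    rw [this, add_zero]
    exact Finset.sum_congr rfl fun ν hν => by simp [hc, hν]
  have h2 : ∑ ν, ‖w ν‖ = ∑ ν ∈ Sᶜ, ‖z ν‖ := by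
    rw [← Finset.sum_add_sum_compl S fun ν => ‖w ν‖]
    have hS0 : ∑ ν ∈ S, ‖w ν‖ = 0 := by
      apply Finset.sum_eq_zero; intro ν hν
      simp [hw, hν]
    rw [hS0, zero_add]
    exact Finset.sum_congr rfl fun ν hν => by
      simp [hw, Finset.mem_compl.mp hν]
  rw [h1, h2] at hlt
  exact hlt
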